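/- Let ρ : ℝ → M_d(ℂ) be differentiable on a neighborhood of t₁, with ρ(t) Hermitian and positive definite for all t in that neighborhood. Then the map t ↦ log ρ(t) is differentiable at t₁ with derivative ∫₀^∞ (ρ(t₁) + u·I)⁻¹ ρ'(t₁) (ρ(t₁) + u·I)⁻¹ du, where the integral is a Bochner integral of a matrix-valued function on (0,∞). -/

import Mathlib

open Matrix
open scoped Kronecker ComplexOrder

attribute [local instance] Matrix.frobeniusNormedAddCommGroup Matrix.frobeniusNormedSpace

/-- The von Neumann entropy `S(A) = −∑ᵢ λᵢ log λᵢ` of a Hermitian matrix `A`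
(with the convention `0 · log 0 = 0`; junk value `0` for non-Hermitian input). -/
noncomputable def entropy {n : Type*} [Fintype n] [DecidableEq n] (A : Matrix n n ℂ) : ℝ :=
  if h : A.IsHermitian then -∑ i, h.eigenvalues i * Real.log (h.eigenvalues i) else 0

/-- The matrix logarithm of a Hermitian matrix: the Hermitian matrix with the same
eigenvectors and eigenvalues `log λᵢ` (junk value `0` for non-Hermitian input). -/
noncomputable def matLog {n : Type*} [Fintype n] [DecidableEq n] (A : Matrix n n ℂ) :
    Matrix n n ℂ :=
  if h : A.IsHermitian then
    (h.eigenvectorUnitary : Matrix n n ℂ) *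
      Matrix.diagonal (fun i => (Real.log (h.eigenvalues i) : ℂ)) *
      (h.eigenvectorUnitary : Matrix n n ℂ)ᴴ
  else 0

/-- Entrywise (Bochner) integral over `(0, ∞)` of a matrix-valued function. -/
noncomputable def matIntegral {n : Type*} [Fintype n] (f : ℝ → Matrix n n ℂ) :
    Matrix n n ℂ :=
  Matrix.of fun i j => ∫ u in Set.Ioi (0 : ℝ), f u i j

attribute [local instance] Matrix.frobeniusNormedRing Matrix.frobeniusNormedAlgebra

private noncomputable instance instESNMat {d : ℕ} :
    ESeminormedAddCommMonoid (Matrix (Fin d) (Fin d) ℂ) :=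
  (@NormedAddCommGroup.toENormedAddCommMonoid _
    (Matrix.frobeniusNormedAddCommGroup : NormedAddCommGroup (Matrix (Fin d) (Fin d) ℂ))).toESeminormedAddCommMonoid

private instance instPMetMat {d : ℕ} : TopologicalSpace.PseudoMetrizableSpace (Matrix (Fin d) (Fin d) ℂ) :=
  (inferInstance : TopologicalSpace.PseudoMetrizableSpace (Fin d → Fin d → ℂ))

open Set MeasureTheory Filter Topology



private lemma hasDerivAt_neg_inv_shift {a : ℝ} (ha : 0 < a) {u : ℝ} (hu : 0 ≤ u) :
    HasDerivAt (fun u : ℝ => -(a + u)⁻¹) (((a + u)^2)⁻¹) u := by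
  have h : a + u ≠ 0 := by positivity
  have := (((hasDerivAt_id u).const_add a).inv h).neg
  exact this.congr_deriv (by simp [neg_div])

private lemma integrableOn_inv_sq {a : ℝ} (ha : 0 < a) :
    IntegrableOn (fun u : ℝ => ((a + u)^2)⁻¹) (Ioi 0) := by
  refine integrableOn_Ioi_deriv_of_nonneg (g := fun u => -(a+u)⁻¹) ?_ ?_ ?_ (l := 0) ?_
  · exact ((((hasDerivAt_neg_inv_shift ha le_rfl)).continuousAt).continuousWithinAt)
  · exact fun x hx => hasDerivAt_neg_inv_shift ha (le_of_lt hx)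
  · intro x hx; positivity
  · have h1 : Tendsto (fun u : ℝ => a + u) atTop atTop := tendsto_atTop_add_const_left _ _ tendsto_id
    have := (tendsto_inv_atTop_zero.comp h1).neg
    simpa using this

private lemma integral_log_rep {lam : ℝ} (hl : 0 < lam) :
    ∫ u in Ioi (0:ℝ), ((1 + u)⁻¹ - (lam + u)⁻¹) = Real.log lam := by
  set a : ℝ := min 1 lam with ha_def
  have ha : 0 < a := lt_min one_pos hl
  have hfint : IntegrableOn (fun u : ℝ => (1 + u)⁻¹ - (lam + u)⁻¹) (Ioi 0) := by
    refine Integrable.mono' ((integrableOn_inv_sq ha).const_mul |lam - 1|) ?_ ?_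
    · refine (ContinuousOn.sub ?_ ?_).aestronglyMeasurable measurableSet_Ioi
      · exact ContinuousOn.inv₀ (by fun_prop) (fun x hx => by have := hx.out; positivity)
      · exact ContinuousOn.inv₀ (by fun_prop) (fun x hx => by have := hx.out; positivity)
    · filter_upwards [ae_restrict_mem measurableSet_Ioi] with u hu
      have hu' : 0 < u := hu
      have h1 : (0:ℝ) < 1 + u := by positivity
      have h2 : (0:ℝ) < lam + u := by positivity
      have heq : (1 + u)⁻¹ - (lam + u)⁻¹ = (lam - 1) / ((1 + u) * (lam + u)) := by
        field_simp
        ring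
      rw [heq, Real.norm_eq_abs, abs_div, abs_of_pos (show (0:ℝ) < (1+u)*(lam+u) by positivity),
        div_eq_mul_inv]
      have hle : (a + u)^2 ≤ (1+u) * (lam+u) := by
        have h3 : a + u ≤ 1 + u := by have : a ≤ 1 := min_le_left _ _; linarith
        have h4 : a + u ≤ lam + u := by have : a ≤ lam := min_le_right _ _; linarith
        have := mul_le_mul h3 h4 (by positivity) (by positivity)
        nlinarith
      have hinv : ((1+u) * (lam+u))⁻¹ ≤ ((a + u)^2)⁻¹ := by
        apply inv_anti₀ (by positivity) hle
      exact mul_le_mul_of_nonneg_left hinv (abs_nonneg _)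
  have key := integral_Ioi_of_hasDerivAt_of_tendsto (a := 0) (m := 0)
    (f := fun u => Real.log (1 + u) - Real.log (lam + u))
    (f' := fun u => (1 + u)⁻¹ - (lam + u)⁻¹) ?_ ?_ hfint ?_
  · rw [key]; simp [Real.log_one]
  · refine (ContinuousAt.sub ?_ ?_).continuousWithinAt
    · exact (Real.continuousAt_log (by norm_num)).comp (by fun_prop)
    · exact (Real.continuousAt_log (by positivity)).comp (by fun_prop)
  · intro x hx
    have hx' : 0 < x := hx
    have d1 : HasDerivAt (fun u : ℝ => Real.log (1 + u)) ((1+x)⁻¹) x := by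
      have := (((hasDerivAt_id x).const_add 1)).log (by positivity)
      simpa [one_div] using this
    have d2 : HasDerivAt (fun u : ℝ => Real.log (lam + u)) ((lam+x)⁻¹) x := by
      have := (((hasDerivAt_id x).const_add lam)).log (by positivity)
      simpa [one_div] using this
    exact d1.sub d2
  · have h1 : Tendsto (fun u : ℝ => (lam - 1) / (lam + u)) atTop (𝓝 0) := by
      have := tendsto_inv_atTop_zero.comp (tendsto_atTop_add_const_left atTop lam tendsto_id)
      simpa [div_eq_mul_inv] using (this.const_mul (lam - 1))
    have h2 : Tendsto (fun u : ℝ => (1 + u) / (lam + u)) atTop (𝓝 1) := by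
      have hev : ∀ᶠ u in atTop, 1 - (lam - 1) / (lam + u) = (1 + u) / (lam + u) := by
        filter_upwards [eventually_gt_atTop 0] with u hu
        have : lam + u ≠ 0 := by positivity
        field_simp
        ring
      have h0 := (tendsto_const_nhds (x := (1:ℝ)) (f := atTop)).sub h1
      rw [sub_zero] at h0
      exact h0.congr' hev
    have h3 : Tendsto (fun u : ℝ => Real.log ((1 + u) / (lam + u))) atTop (𝓝 0) := by
      rw [show (0:ℝ) = Real.log 1 by simp]
      exact ((Real.continuousAt_log one_ne_zero).tendsto.comp h2)
    refine h3.congr' ?_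
    filter_upwards [eventually_gt_atTop 0] with u hu
    rw [Real.log_div (by positivity) (by positivity)]


variable {d : ℕ}

private lemma norm_entry_le_frob (A : Matrix (Fin d) (Fin d) ℂ) (i j : Fin d) :
    ‖A i j‖ ≤ ‖A‖ := by
  rw [Matrix.frobenius_norm_def]
  have h1 : ‖A i j‖ ^ (2:ℝ) ≤ ∑ i', ∑ j', ‖A i' j'‖ ^ (2:ℝ) := by
    calc ‖A i j‖ ^ (2:ℝ) ≤ ∑ j', ‖A i j'‖ ^ (2:ℝ) :=
          Finset.single_le_sum (f := fun j' => ‖A i j'‖ ^ (2:ℝ)) (fun _ _ => by positivity)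
            (Finset.mem_univ j)
      _ ≤ ∑ i', ∑ j', ‖A i' j'‖ ^ (2:ℝ) :=
          Finset.single_le_sum (f := fun i' => ∑ j', ‖A i' j'‖ ^ (2:ℝ))
            (fun _ _ => Finset.sum_nonneg fun _ _ => by positivity) (Finset.mem_univ i)
  have h2 := Real.rpow_le_rpow (by positivity) h1 (by norm_num : (0:ℝ) ≤ 1/2)
  calc ‖A i j‖ = (‖A i j‖ ^ (2:ℝ)) ^ (1/2:ℝ) := by
        rw [← Real.rpow_mul (norm_nonneg _)]; norm_num
    _ ≤ _ := h2

private lemma frob_norm_le_of_entries {A : Matrix (Fin d) (Fin d) ℂ} {b : ℝ} (hb : 0 ≤ b)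
    (h : ∀ i j, ‖A i j‖ ≤ b) : ‖A‖ ≤ d * b := by
  rw [Matrix.frobenius_norm_def]
  have h1 : ∑ i, ∑ j, ‖A i j‖ ^ (2:ℝ) ≤ ((d:ℝ) * b) ^ (2:ℝ) := by
    calc ∑ i, ∑ j, ‖A i j‖ ^ (2:ℝ) ≤ ∑ _i : Fin d, ∑ _j : Fin d, b ^ (2:ℝ) :=
          Finset.sum_le_sum fun i _ => Finset.sum_le_sum fun j _ =>
            Real.rpow_le_rpow (norm_nonneg _) (h i j) (by norm_num)
      _ = (d:ℝ) * ((d:ℝ) * b ^ (2:ℝ)) := by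
          simp [Finset.sum_const, Finset.card_univ, mul_assoc]
      _ = ((d:ℝ) * b) ^ (2:ℝ) := by
          rw [show (2:ℝ) = ((2:ℕ):ℝ) by norm_num, Real.rpow_natCast, Real.rpow_natCast]
          ring
  have h2 := Real.rpow_le_rpow (by positivity) h1 (by norm_num : (0:ℝ) ≤ 1/2)
  calc (∑ i, ∑ j, ‖A i j‖ ^ (2:ℝ)) ^ (1/2:ℝ) ≤ (((d:ℝ) * b) ^ (2:ℝ)) ^ (1/2:ℝ) := h2
    _ = (d:ℝ) * b := by rw [← Real.rpow_mul (by positivity)]; norm_num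

/-- sum of squares of entries of a vector -/
private noncomputable def s2 {d : ℕ} (x : Fin d → ℂ) : ℝ := ∑ i, ‖x i‖ ^ 2

private lemma s2_nonneg (x : Fin d → ℂ) : 0 ≤ s2 x := Finset.sum_nonneg fun _ _ => by positivity

private lemma norm_sq_le_s2 (x : Fin d → ℂ) (i : Fin d) : ‖x i‖ ^ 2 ≤ s2 x :=
  Finset.single_le_sum (f := fun i => ‖x i‖ ^ 2) (fun _ _ => by positivity) (Finset.mem_univ i)

private lemma star_dot_self_re (x : Fin d → ℂ) : (star x ⬝ᵥ x).re = s2 x := by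
  rw [dotProduct, Complex.re_sum]
  refine Finset.sum_congr rfl fun i _ => ?_
  have h : star x i * x i = ((Complex.normSq (x i) : ℝ) : ℂ) := by
    rw [Pi.star_apply, Complex.star_def, ← Complex.normSq_eq_conj_mul_self]
  rw [h, Complex.ofReal_re, Complex.normSq_eq_norm_sq]

private lemma herm_dot_real {M : Matrix (Fin d) (Fin d) ℂ} (hM : M.IsHermitian)
    (x : Fin d → ℂ) : (star x ⬝ᵥ M *ᵥ x).im = 0 := by
  have h : star (star x ⬝ᵥ M *ᵥ x) = star x ⬝ᵥ M *ᵥ x := by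
    calc star (star x ⬝ᵥ M *ᵥ x) = star (M *ᵥ x) ⬝ᵥ x := (star_dotProduct _ _).symm
      _ = (star x ᵥ* Mᴴ) ⬝ᵥ x := by rw [star_mulVec]
      _ = star x ⬝ᵥ Mᴴ *ᵥ x := by rw [← dotProduct_mulVec]
      _ = star x ⬝ᵥ M *ᵥ x := by rw [hM.eq]
  have h2 := congrArg Complex.im h
  simp only [Complex.star_def, Complex.conj_im] at h2
  linarith

private lemma dot_bound (Δ : Matrix (Fin d) (Fin d) ℂ) (x : Fin d → ℂ) :
    ‖star x ⬝ᵥ Δ *ᵥ x‖ ≤ (∑ i, ∑ j, ‖Δ i j‖) * s2 x := by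
  rw [dotProduct]
  calc ‖∑ i, star x i * (Δ *ᵥ x) i‖ ≤ ∑ i, ‖star x i * (Δ *ᵥ x) i‖ := norm_sum_le _ _
    _ ≤ ∑ i, ∑ j, ‖Δ i j‖ * s2 x := by
        refine Finset.sum_le_sum fun i _ => ?_
        rw [norm_mul]
        show ‖star x i‖ * ‖dotProduct _ _‖ ≤ _
        rw [dotProduct]
        calc ‖star x i‖ * ‖∑ j, Δ i j * x j‖ ≤ ‖x i‖ * ∑ j, ‖Δ i j‖ * ‖x j‖ := by
              rw [Pi.star_apply, norm_star]
              refine mul_le_mul_of_nonneg_left ?_ (norm_nonneg _)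
              exact (norm_sum_le _ _).trans (le_of_eq (by simp [norm_mul]))
          _ = ∑ j, ‖Δ i j‖ * (‖x i‖ * ‖x j‖) := by
              rw [Finset.mul_sum]; exact Finset.sum_congr rfl fun j _ => by ring
          _ ≤ ∑ j, ‖Δ i j‖ * s2 x := by
              refine Finset.sum_le_sum fun j _ => ?_
              refine mul_le_mul_of_nonneg_left ?_ (norm_nonneg _)
              have h1 := norm_sq_le_s2 x i
              have h2 := norm_sq_le_s2 x j
              nlinarith [norm_nonneg (x i), norm_nonneg (x j), sq_nonneg (‖x i‖ - ‖x j‖)]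
    _ = (∑ i, ∑ j, ‖Δ i j‖) * s2 x := by
        rw [Finset.sum_mul]; exact Finset.sum_congr rfl fun i _ => by rw [Finset.sum_mul]

/-- A positive definite matrix is uniformly coercive. -/
private lemma posdef_coercive {A : Matrix (Fin d) (Fin d) ℂ} (hA : A.PosDef) :
    ∃ c > 0, ∀ x : Fin d → ℂ, c * s2 x ≤ (star x ⬝ᵥ A *ᵥ x).re := by
  rcases Nat.eq_zero_or_pos d with hd | hd
  · refine ⟨1, one_pos, fun x => ?_⟩
    subst hd
    simp [s2, dotProduct]
  · have hne : (Finset.univ : Finset (Fin d)).Nonempty := ⟨⟨0, hd⟩, Finset.mem_univ _⟩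
    set lam := hA.1.eigenvalues
    set c := Finset.univ.inf' hne lam with hc_def
    have hc : 0 < c := by
      rw [hc_def, Finset.lt_inf'_iff]
      exact fun i _ => hA.eigenvalues_pos i
    refine ⟨c, hc, fun x => ?_⟩
    set U : Matrix (Fin d) (Fin d) ℂ := (hA.1.eigenvectorUnitary : Matrix (Fin d) (Fin d) ℂ)
    have hU : U * star U = 1 := (Matrix.mem_unitaryGroup_iff).mp hA.1.eigenvectorUnitary.2
    have hspec : A - (c:ℂ) • 1 = U * Matrix.diagonal (fun i => ((lam i - c : ℝ) : ℂ)) * star U := by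
      have h1 : A = U * Matrix.diagonal (RCLike.ofReal ∘ lam) * star U := hA.1.spectral_theorem
      have h2 : (c:ℂ) • (1 : Matrix (Fin d) (Fin d) ℂ) = U * ((c:ℂ) • 1) * star U := by
        rw [Matrix.mul_smul, Matrix.smul_mul, mul_one, hU]
      rw [h1, h2, ← Matrix.sub_mul, ← Matrix.mul_sub]
      congr 2
      rw [Matrix.smul_one_eq_diagonal, Matrix.diagonal_sub]
      congr 1
      ext i
      push_cast
      rfl
    have hpsd : ((A - (c:ℂ) • 1)).PosSemidef := by
      rw [hspec]
      refine Matrix.PosSemidef.mul_mul_conjTranspose_same ?_ U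
      refine Matrix.posSemidef_diagonal_iff.mpr fun i => ?_
      rw [Complex.zero_le_real]
      have := Finset.inf'_le lam (Finset.mem_univ i)
      linarith
    have hre : 0 ≤ (star x ⬝ᵥ (A - (c:ℂ) • 1) *ᵥ x).re := (Complex.le_def.mp (hpsd.dotProduct_mulVec_nonneg x)).1
    have hexp : star x ⬝ᵥ (A - (c:ℂ) • 1) *ᵥ x
        = star x ⬝ᵥ A *ᵥ x - (c:ℂ) * (star x ⬝ᵥ x) := by
      rw [Matrix.sub_mulVec, dotProduct_sub]
      congr 1
      rw [Matrix.smul_mulVec, Matrix.one_mulVec, dotProduct_smul, smul_eq_mul]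
    rw [hexp, Complex.sub_re, Complex.mul_re, Complex.ofReal_re, Complex.ofReal_im, zero_mul,
      sub_zero, star_dot_self_re] at hre
    linarith

/-- Coercive Hermitian matrices are positive definite with controlled inverse norm. -/
private lemma inv_norm_le_of_coercive {M : Matrix (Fin d) (Fin d) ℂ} (hM : M.IsHermitian)
    {c : ℝ} (hc : 0 < c) (hco : ∀ x : Fin d → ℂ, c * s2 x ≤ (star x ⬝ᵥ M *ᵥ x).re) :
    M.PosDef ∧ ‖M⁻¹‖ ≤ d / c := by
  have hpd : M.PosDef := by
    refine Matrix.PosDef.of_dotProduct_mulVec_pos hM fun x hx => ?_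
    rw [Complex.lt_def]
    constructor
    · simp only [Complex.zero_re]
      refine lt_of_lt_of_le ?_ (hco x)
      have hs : 0 < s2 x := by
        obtain ⟨i, hi⟩ := Function.ne_iff.mp hx
        have h5 : 0 < ‖x i‖ ^ 2 := pow_pos (norm_pos_iff.mpr hi) 2
        calc (0:ℝ) < ‖x i‖ ^ 2 := h5
          _ ≤ s2 x := norm_sq_le_s2 x i
      exact mul_pos hc hs
    · simp only [Complex.zero_im]
      exact (herm_dot_real hM x).symm
  have hdet : IsUnit M.det := hpd.det_pos.ne'.isUnit
  refine ⟨hpd, ?_⟩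
  have hentry : ∀ i j, ‖M⁻¹ i j‖ ≤ 1 / c := by
    intro i j
    set x : Fin d → ℂ := M⁻¹ *ᵥ Pi.single j 1 with hx_def
    have hMx : M *ᵥ x = Pi.single j 1 := by
      rw [hx_def, Matrix.mulVec_mulVec, Matrix.mul_nonsing_inv _ hdet, Matrix.one_mulVec]
    have hxi : ∀ k, x k = M⁻¹ k j := by
      intro k
      rw [hx_def, Matrix.mulVec_single]
      simp
    have key : c * s2 x ≤ Real.sqrt (s2 x) := by
      have h1 := hco x
      rw [hMx, dotProduct_single, mul_one] at h1
      have h2 : (star x j).re ≤ ‖x j‖ := by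
        calc (star x j).re ≤ ‖star x j‖ := Complex.re_le_norm _
          _ = ‖x j‖ := norm_star _
      have h3 : ‖x j‖ ≤ Real.sqrt (s2 x) := by
        rw [show ‖x j‖ = Real.sqrt (‖x j‖ ^ 2) from (Real.sqrt_sq (norm_nonneg _)).symm]
        exact Real.sqrt_le_sqrt (norm_sq_le_s2 x j)
      calc c * s2 x ≤ (star x j).re := h1
        _ ≤ ‖x j‖ := h2
        _ ≤ Real.sqrt (s2 x) := h3
    have hs : Real.sqrt (s2 x) ≤ 1 / c := by
      rcases eq_or_lt_of_le (Real.sqrt_nonneg (s2 x)) with h0 | h0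
      · rw [← h0]; positivity
      · have h4 : c * (Real.sqrt (s2 x) * Real.sqrt (s2 x)) ≤ Real.sqrt (s2 x) := by
          rw [Real.mul_self_sqrt (s2_nonneg x)]; exact key
        have h5 : c * Real.sqrt (s2 x) ≤ 1 := by nlinarith
        rw [le_div_iff₀ hc]
        nlinarith
    calc ‖M⁻¹ i j‖ = ‖x i‖ := by rw [hxi i]
      _ ≤ Real.sqrt (s2 x) := by
          rw [show ‖x i‖ = Real.sqrt (‖x i‖ ^ 2) from (Real.sqrt_sq (norm_nonneg _)).symm]
          exact Real.sqrt_le_sqrt (norm_sq_le_s2 x i)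
      _ ≤ 1 / c := hs
  calc ‖M⁻¹‖ ≤ d * (1 / c) := frob_norm_le_of_entries (by positivity) hentry
    _ = d / c := by ring

section Chunk3
variable {d : ℕ}

private lemma herm_add_smul {M : Matrix (Fin d) (Fin d) ℂ} (hM : M.IsHermitian) (u : ℝ) :
    (M + (u:ℂ) • 1).IsHermitian := by
  have h1 : ((u:ℂ) • (1 : Matrix (Fin d) (Fin d) ℂ)).IsHermitian := by
    rw [Matrix.IsHermitian, Matrix.conjTranspose_smul, Matrix.conjTranspose_one]
    norm_num
  exact hM.add h1

private lemma coercive_add_smul {M : Matrix (Fin d) (Fin d) ℂ} {c : ℝ}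
    (hco : ∀ x : Fin d → ℂ, c * s2 x ≤ (star x ⬝ᵥ M *ᵥ x).re) {u : ℝ} (hu : 0 ≤ u) :
    ∀ x : Fin d → ℂ, (c + u) * s2 x ≤ (star x ⬝ᵥ (M + (u:ℂ) • 1) *ᵥ x).re := by
  intro x
  rw [Matrix.add_mulVec, dotProduct_add, Complex.add_re, Matrix.smul_mulVec,
    Matrix.one_mulVec, dotProduct_smul, smul_eq_mul, Complex.mul_re, Complex.ofReal_re,
    Complex.ofReal_im, zero_mul, sub_zero, star_dot_self_re]
  have := hco x
  linarith

/-- the inverse of a shifted coercive Hermitian matrix, with norm bound -/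
private lemma inv_bound {M : Matrix (Fin d) (Fin d) ℂ} (hM : M.IsHermitian) {c : ℝ} (hc : 0 < c)
    (hco : ∀ x : Fin d → ℂ, c * s2 x ≤ (star x ⬝ᵥ M *ᵥ x).re) {u : ℝ} (hu : 0 ≤ u) :
    (M + (u:ℂ) • 1).PosDef ∧ ‖(M + (u:ℂ) • 1)⁻¹‖ ≤ d / (c + u) :=
  inv_norm_le_of_coercive (herm_add_smul hM u) (by linarith) (coercive_add_smul hco hu)

private lemma unitary_mul_star {A : Matrix (Fin d) (Fin d) ℂ} (hA : A.IsHermitian) :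
    (hA.eigenvectorUnitary : Matrix (Fin d) (Fin d) ℂ) * star (hA.eigenvectorUnitary : Matrix (Fin d) (Fin d) ℂ) = 1 :=
  (Matrix.mem_unitaryGroup_iff).mp hA.eigenvectorUnitary.2

private lemma star_mul_unitary {A : Matrix (Fin d) (Fin d) ℂ} (hA : A.IsHermitian) :
    star (hA.eigenvectorUnitary : Matrix (Fin d) (Fin d) ℂ) * (hA.eigenvectorUnitary : Matrix (Fin d) (Fin d) ℂ) = 1 :=
  (Matrix.mem_unitaryGroup_iff').mp hA.eigenvectorUnitary.2

/-- spectral form of the shifted matrix -/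
private lemma shift_spectral {A : Matrix (Fin d) (Fin d) ℂ} (hA : A.IsHermitian) (u : ℝ) :
    A + (u:ℂ) • 1 = (hA.eigenvectorUnitary : Matrix (Fin d) (Fin d) ℂ) *
      Matrix.diagonal (fun i => ((hA.eigenvalues i + u : ℝ) : ℂ)) *
      star (hA.eigenvectorUnitary : Matrix (Fin d) (Fin d) ℂ) := by
  set U : Matrix (Fin d) (Fin d) ℂ := (hA.eigenvectorUnitary : Matrix (Fin d) (Fin d) ℂ)
  have h1 : A = U * Matrix.diagonal (RCLike.ofReal ∘ hA.eigenvalues) * star U :=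
    hA.spectral_theorem
  have h2 : (u:ℂ) • (1 : Matrix (Fin d) (Fin d) ℂ) = U * ((u:ℂ) • 1) * star U := by
    rw [Matrix.mul_smul, Matrix.smul_mul, mul_one, unitary_mul_star hA]
  conv_lhs => rw [h1, h2]
  rw [← Matrix.add_mul, ← Matrix.mul_add]
  congr 2
  rw [Matrix.smul_one_eq_diagonal, Matrix.diagonal_add]
  congr 1
  ext i
  push_cast
  rfl

/-- spectral form of the inverse of the shifted matrix -/
private lemma shift_inv_spectral {A : Matrix (Fin d) (Fin d) ℂ} (hA : A.IsHermitian) {u : ℝ}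
    (hu : ∀ i, hA.eigenvalues i + u ≠ 0) :
    (A + (u:ℂ) • 1)⁻¹ = (hA.eigenvectorUnitary : Matrix (Fin d) (Fin d) ℂ) *
      Matrix.diagonal (fun i => (((hA.eigenvalues i + u : ℝ) : ℂ))⁻¹) *
      star (hA.eigenvectorUnitary : Matrix (Fin d) (Fin d) ℂ) := by
  set U : Matrix (Fin d) (Fin d) ℂ := (hA.eigenvectorUnitary : Matrix (Fin d) (Fin d) ℂ)
  refine Matrix.inv_eq_left_inv ?_
  rw [shift_spectral hA u]
  calc U * Matrix.diagonal (fun i => (((hA.eigenvalues i + u : ℝ) : ℂ))⁻¹) * star U *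
        (U * Matrix.diagonal (fun i => ((hA.eigenvalues i + u : ℝ) : ℂ)) * star U)
      = U * Matrix.diagonal (fun i => (((hA.eigenvalues i + u : ℝ) : ℂ))⁻¹) * (star U * U) *
        Matrix.diagonal (fun i => ((hA.eigenvalues i + u : ℝ) : ℂ)) * star U := by
        simp only [Matrix.mul_assoc]
    _ = U * (Matrix.diagonal (fun i => (((hA.eigenvalues i + u : ℝ) : ℂ))⁻¹) *
        Matrix.diagonal (fun i => ((hA.eigenvalues i + u : ℝ) : ℂ))) * star U := by
        rw [star_mul_unitary hA, Matrix.mul_one]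
        simp only [Matrix.mul_assoc]
    _ = 1 := by
        rw [Matrix.diagonal_mul_diagonal]
        have hdiag : (fun i => (((hA.eigenvalues i + u : ℝ) : ℂ))⁻¹ * ((hA.eigenvalues i + u : ℝ) : ℂ))
            = fun _ => (1:ℂ) := by
          ext i
          exact inv_mul_cancel₀ (by exact_mod_cast hu i)
        rw [hdiag, Matrix.diagonal_one, Matrix.mul_one, unitary_mul_star hA]

private lemma diagonal_eq_sum_single (v : Fin d → ℂ) :
    Matrix.diagonal v = ∑ k, v k • Matrix.diagonal (Pi.single k (1:ℂ)) := by
  ext i j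
  rw [Matrix.sum_apply]
  simp only [Matrix.smul_apply, Matrix.diagonal_apply, Pi.single_apply, smul_eq_mul]
  by_cases hij : i = j
  · subst hij
    simp
  · simp [hij]

/-- the eigenprojection-like matrices -/
private noncomputable def projMat {A : Matrix (Fin d) (Fin d) ℂ} (hA : A.IsHermitian)
    (k : Fin d) : Matrix (Fin d) (Fin d) ℂ :=
  (hA.eigenvectorUnitary : Matrix (Fin d) (Fin d) ℂ) * Matrix.diagonal (Pi.single k (1:ℂ)) *
    star (hA.eigenvectorUnitary : Matrix (Fin d) (Fin d) ℂ)

private lemma conj_diag_eq_sum {A : Matrix (Fin d) (Fin d) ℂ} (hA : A.IsHermitian)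
    (v : Fin d → ℂ) :
    (hA.eigenvectorUnitary : Matrix (Fin d) (Fin d) ℂ) * Matrix.diagonal v *
      star (hA.eigenvectorUnitary : Matrix (Fin d) (Fin d) ℂ) = ∑ k, v k • projMat hA k := by
  set U : Matrix (Fin d) (Fin d) ℂ := (hA.eigenvectorUnitary : Matrix (Fin d) (Fin d) ℂ)
  rw [diagonal_eq_sum_single v, Finset.mul_sum, Finset.sum_mul]
  refine Finset.sum_congr rfl fun k _ => ?_
  rw [Matrix.mul_smul, Matrix.smul_mul]
  rfl
end Chunk3

section Chunk4
variable {d : ℕ}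

private lemma integrable_phi {lam : ℝ} (hl : 0 < lam) :
    IntegrableOn (fun u : ℝ => (1 + u)⁻¹ - (lam + u)⁻¹) (Ioi 0) := by
  set a : ℝ := min 1 lam with ha_def
  have ha : 0 < a := lt_min one_pos hl
  refine Integrable.mono' ((integrableOn_inv_sq ha).const_mul |lam - 1|) ?_ ?_
  · refine (ContinuousOn.sub ?_ ?_).aestronglyMeasurable measurableSet_Ioi
    · exact ContinuousOn.inv₀ (by fun_prop) (fun x hx => by have := hx.out; positivity)
    · exact ContinuousOn.inv₀ (by fun_prop) (fun x hx => by have := hx.out; positivity)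
  · filter_upwards [ae_restrict_mem measurableSet_Ioi] with u hu
    have hu' : 0 < u := hu
    have h1 : (0:ℝ) < 1 + u := by positivity
    have h2 : (0:ℝ) < lam + u := by positivity
    have heq : (1 + u)⁻¹ - (lam + u)⁻¹ = (lam - 1) / ((1 + u) * (lam + u)) := by
      field_simp
      ring
    rw [heq, Real.norm_eq_abs, abs_div, abs_of_pos (show (0:ℝ) < (1+u)*(lam+u) by positivity),
      div_eq_mul_inv]
    have hle : (a + u)^2 ≤ (1+u) * (lam+u) := by
      have h3 : a + u ≤ 1 + u := by have : a ≤ 1 := min_le_left _ _; linarith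
      have h4 : a + u ≤ lam + u := by have : a ≤ lam := min_le_right _ _; linarith
      nlinarith
    have hinv : ((1+u) * (lam+u))⁻¹ ≤ ((a + u)^2)⁻¹ :=
      inv_anti₀ (by positivity) hle
    exact mul_le_mul_of_nonneg_left hinv (abs_nonneg _)

private lemma matF_eq {A : Matrix (Fin d) (Fin d) ℂ} (hA : A.PosDef) {u : ℝ}
    (hu : u ∈ Ioi (0:ℝ)) :
    (((1 + u)⁻¹ : ℝ) : ℂ) • (1 : Matrix (Fin d) (Fin d) ℂ) - (A + (u:ℂ) • 1)⁻¹
      = ∑ k, (((1 + u)⁻¹ - (hA.1.eigenvalues k + u)⁻¹ : ℝ) : ℂ) • projMat hA.1 k := by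
  have hu' : (0:ℝ) < u := hu
  have hinv := shift_inv_spectral hA.1
    (fun i => by have := hA.eigenvalues_pos i; positivity)
  have hone : (((1 + u)⁻¹ : ℝ) : ℂ) • (1 : Matrix (Fin d) (Fin d) ℂ)
      = (hA.1.eigenvectorUnitary : Matrix (Fin d) (Fin d) ℂ) *
        Matrix.diagonal (fun _ : Fin d => (((1 + u)⁻¹ : ℝ) : ℂ)) *
        star (hA.1.eigenvectorUnitary : Matrix (Fin d) (Fin d) ℂ) := by
    have h2 : (((1 + u)⁻¹ : ℝ) : ℂ) • (1 : Matrix (Fin d) (Fin d) ℂ)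
        = (hA.1.eigenvectorUnitary : Matrix (Fin d) (Fin d) ℂ) *
          ((((1 + u)⁻¹ : ℝ) : ℂ) • 1) *
          star (hA.1.eigenvectorUnitary : Matrix (Fin d) (Fin d) ℂ) := by
      rw [Matrix.mul_smul, Matrix.smul_mul, mul_one, unitary_mul_star hA.1]
    rw [h2, Matrix.smul_one_eq_diagonal]
  rw [hinv, hone, ← Matrix.sub_mul, ← Matrix.mul_sub, Matrix.diagonal_sub]
  have hd : (fun i => (((1 + u)⁻¹ : ℝ) : ℂ) - (((hA.1.eigenvalues i + u : ℝ) : ℂ))⁻¹)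
      = fun k => (((1 + u)⁻¹ - (hA.1.eigenvalues k + u)⁻¹ : ℝ) : ℂ) := by
    ext k
    push_cast
    ring
  rw [hd]
  exact conj_diag_eq_sum hA.1 _

private lemma matLog_eq_integral {A : Matrix (Fin d) (Fin d) ℂ} (hA : A.PosDef) :
    ∫ u in Ioi (0:ℝ),
        ((((1 + u)⁻¹ : ℝ) : ℂ) • (1 : Matrix (Fin d) (Fin d) ℂ) - (A + (u:ℂ) • 1)⁻¹)
      = matLog A := by
  rw [setIntegral_congr_fun measurableSet_Ioi (fun u hu => matF_eq hA hu)]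
  have hswap := integral_finset_sum (μ := volume.restrict (Ioi 0)) Finset.univ
    (f := fun k (u:ℝ) => (((1 + u)⁻¹ - (hA.1.eigenvalues k + u)⁻¹ : ℝ) : ℂ) • projMat hA.1 k)
    (fun k _ => ((integrable_phi (hA.eigenvalues_pos k)).ofReal).smul_const _)
  rw [hswap]
  calc ∑ k, ∫ u in Ioi (0:ℝ), (((1 + u)⁻¹ - (hA.1.eigenvalues k + u)⁻¹ : ℝ) : ℂ) • projMat hA.1 k
      = ∑ k, ((Real.log (hA.1.eigenvalues k) : ℝ) : ℂ) • projMat hA.1 k := by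
        refine Finset.sum_congr rfl fun k _ => ?_
        have hco : (∫ x in Ioi (0:ℝ), (((1 + x)⁻¹ - (hA.1.eigenvalues k + x)⁻¹ : ℝ) : ℂ))
            = ((Real.log (hA.1.eigenvalues k) : ℝ) : ℂ) := by
          rw [← integral_log_rep (hA.eigenvalues_pos k)]
          exact integral_ofReal (𝕜 := ℂ)
        rw [integral_smul_const, hco]
    _ = matLog A := by
        rw [← conj_diag_eq_sum hA.1]
        unfold matLog
        rw [dif_pos hA.1]
        rfl

private lemma integrable_matF {A : Matrix (Fin d) (Fin d) ℂ} (hA : A.PosDef) :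
    IntegrableOn (fun u : ℝ =>
      (((1 + u)⁻¹ : ℝ) : ℂ) • (1 : Matrix (Fin d) (Fin d) ℂ) - (A + (u:ℂ) • 1)⁻¹) (Ioi 0) := by
  have hsum : IntegrableOn (fun u : ℝ =>
      ∑ k, (((1 + u)⁻¹ - (hA.1.eigenvalues k + u)⁻¹ : ℝ) : ℂ) • projMat hA.1 k) (Ioi 0) :=
    integrable_finset_sum _ fun k _ =>
      ((integrable_phi (hA.eigenvalues_pos k)).ofReal).smul_const _
  exact hsum.congr_fun (fun u hu => (matF_eq hA hu).symm) measurableSet_Ioi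

end Chunk4

section Chunk5
variable {d : ℕ}

private lemma inv_sub_inv_mat {A B : Matrix (Fin d) (Fin d) ℂ} (hA : IsUnit A.det)
    (hB : IsUnit B.det) : B⁻¹ - A⁻¹ = B⁻¹ * (A - B) * A⁻¹ := by
  rw [Matrix.mul_sub, Matrix.sub_mul, Matrix.mul_assoc, Matrix.mul_nonsing_inv _ hA,
    Matrix.mul_one, Matrix.nonsing_inv_mul _ hB, Matrix.one_mul]

private noncomputable def entryCLM (i j : Fin d) : Matrix (Fin d) (Fin d) ℂ →L[ℝ] ℂ :=
  LinearMap.toContinuousLinearMap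
    { toFun := fun A => A i j
      map_add' := fun _ _ => rfl
      map_smul' := fun _ _ => rfl }

private lemma matIntegral_eq {f : ℝ → Matrix (Fin d) (Fin d) ℂ}
    (hf : IntegrableOn f (Ioi 0)) : matIntegral f = ∫ u in Ioi (0:ℝ), f u := by
  ext i j
  show (∫ u in Ioi (0:ℝ), f u i j) = (∫ u in Ioi (0:ℝ), f u) i j
  have hcc := (entryCLM i j).integral_comp_comm (μ := volume.restrict (Ioi 0)) hf
  exact hcc

private lemma contAt_inv_mat {X : Type*} [TopologicalSpace X]
    {f : X → Matrix (Fin d) (Fin d) ℂ} {x : X} (hf : ContinuousAt f x)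
    (hdet : IsUnit (f x).det) : ContinuousAt (fun y => (f y)⁻¹) x := by
  have h1 : ContinuousAt (Ring.inverse : ℂ → ℂ) (f x).det := by
    rw [Ring.inverse_eq_inv']
    exact continuousAt_inv₀ hdet.ne_zero
  exact (continuousAt_matrix_inv (f x) h1).comp hf

private lemma contOn_inv_shift {M : Matrix (Fin d) (Fin d) ℂ} (hM : M.IsHermitian) {c : ℝ}
    (hc : 0 < c) (hco : ∀ x : Fin d → ℂ, c * s2 x ≤ (star x ⬝ᵥ M *ᵥ x).re) :
    ContinuousOn (fun u : ℝ => (M + (u:ℂ) • 1)⁻¹) (Ioi 0) := by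
  intro u hu
  have hu' : (0:ℝ) < u := hu
  refine ContinuousAt.continuousWithinAt ?_
  refine contAt_inv_mat ?_ ?_
  · exact (continuousAt_const.add ((Complex.continuous_ofReal.smul
      (continuous_const (y := (1 : Matrix (Fin d) (Fin d) ℂ)))).continuousAt))
  · exact (inv_bound hM hc hco hu'.le).1.det_pos.ne'.isUnit

private lemma eventually_coercive {ρ : ℝ → Matrix (Fin d) (Fin d) ℂ} {t₁ : ℝ}
    (hcont : ContinuousAt ρ t₁) (hpd : (ρ t₁).PosDef) :
    ∃ c > 0, ∀ᶠ t in 𝓝 t₁, ∀ x : Fin d → ℂ, c * s2 x ≤ (star x ⬝ᵥ (ρ t) *ᵥ x).re := by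
  obtain ⟨c0, hc0, hco⟩ := posdef_coercive hpd
  refine ⟨c0/2, by positivity, ?_⟩
  have hKtend : Tendsto (fun t => ∑ i, ∑ j, ‖(ρ t - ρ t₁) i j‖) (𝓝 t₁) (𝓝 0) := by
    have hzero : Tendsto (fun t => ρ t - ρ t₁) (𝓝 t₁) (𝓝 0) := by
      have := hcont.sub (continuousAt_const (y := ρ t₁))
      have h := this.tendsto
      simp only [Pi.sub_apply, sub_self] at h
      exact h
    have hentry : ∀ i j : Fin d, Tendsto (fun t => ‖(ρ t - ρ t₁) i j‖) (𝓝 t₁) (𝓝 0) := by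
      intro i j
      have h1 : Tendsto (fun t => (ρ t - ρ t₁) i j) (𝓝 t₁) (𝓝 0) := by
        have := ((entryCLM i j).continuous.tendsto 0).comp hzero
        rw [map_zero] at this
        exact this
      simpa using h1.norm
    have := tendsto_finset_sum (Finset.univ : Finset (Fin d))
      (fun i _ => tendsto_finset_sum (Finset.univ : Finset (Fin d)) (fun j _ => hentry i j))
    simpa using this
  have hev : ∀ᶠ t in 𝓝 t₁, ∑ i, ∑ j, ‖(ρ t - ρ t₁) i j‖ < c0/2 :=
    hKtend.eventually_lt_const (by positivity)
  filter_upwards [hev] with t ht x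
  have h1 := hco x
  have h2 : ‖star x ⬝ᵥ (ρ t - ρ t₁) *ᵥ x‖ ≤ (∑ i, ∑ j, ‖(ρ t - ρ t₁) i j‖) * s2 x :=
    dot_bound _ x
  have h3 : star x ⬝ᵥ (ρ t) *ᵥ x = star x ⬝ᵥ (ρ t₁) *ᵥ x + star x ⬝ᵥ (ρ t - ρ t₁) *ᵥ x := by
    rw [← dotProduct_add, ← Matrix.add_mulVec, add_sub_cancel]
  have h4 : -((c0/2) * s2 x) ≤ (star x ⬝ᵥ (ρ t - ρ t₁) *ᵥ x).re := by
    have h5 : |(star x ⬝ᵥ (ρ t - ρ t₁) *ᵥ x).re| ≤ ‖star x ⬝ᵥ (ρ t - ρ t₁) *ᵥ x‖ :=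
      Complex.abs_re_le_norm _
    have h6 : (∑ i, ∑ j, ‖(ρ t - ρ t₁) i j‖) * s2 x ≤ (c0/2) * s2 x :=
      mul_le_mul_of_nonneg_right ht.le (s2_nonneg x)
    have h7 := (abs_le.mp (h5.trans (h2.trans h6))).1
    linarith
  rw [h3, Complex.add_re]
  linarith

end Chunk5

/-- If `ρ(t)` is a differentiable family of positive definite Hermitian matrices near `t₁`,
then `t ↦ log ρ(t)` is differentiable at `t₁` with derivative
`∫₀^∞ (ρ(t₁)+u)⁻¹ ρ'(t₁) (ρ(t₁)+u)⁻¹ du`. -/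
theorem matLog_hasDerivAt {d : ℕ} (ρ : ℝ → Matrix (Fin d) (Fin d) ℂ) (t₁ : ℝ)
    (h : ∀ᶠ t in nhds t₁, DifferentiableAt ℝ ρ t ∧ (ρ t).PosDef) :
    HasDerivAt (fun t => matLog (ρ t))
      (matIntegral (fun u => (ρ t₁ + (u : ℂ) • 1)⁻¹ * deriv ρ t₁ * (ρ t₁ + (u : ℂ) • 1)⁻¹))
      t₁ := by
  have hsel := h.self_of_nhds
  have hd1 : DifferentiableAt ℝ ρ t₁ := hsel.1
  have hpd1 : (ρ t₁).PosDef := hsel.2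
  have herm1 : (ρ t₁).IsHermitian := hpd1.1
  have hρ' : HasDerivAt ρ (deriv ρ t₁) t₁ := hd1.hasDerivAt
  have hcontρ : ContinuousAt ρ t₁ := hd1.continuousAt
  obtain ⟨c, hc, hcoev⟩ := eventually_coercive hcontρ hpd1
  have hco1 : ∀ x : Fin d → ℂ, c * s2 x ≤ (star x ⬝ᵥ (ρ t₁) *ᵥ x).re := hcoev.self_of_nhds
  set D' : Matrix (Fin d) (Fin d) ℂ := deriv ρ t₁ with hD'
  set G : ℝ → Matrix (Fin d) (Fin d) ℂ :=
    fun u => (ρ t₁ + (u:ℂ) • 1)⁻¹ * D' * (ρ t₁ + (u:ℂ) • 1)⁻¹ with hG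
  -- integrability of the limit integrand G
  have hGmeas : AEStronglyMeasurable G (volume.restrict (Ioi 0)) :=
    (ContinuousOn.mul (ContinuousOn.mul (contOn_inv_shift herm1 hc hco1)
      continuousOn_const) (contOn_inv_shift herm1 hc hco1)).aestronglyMeasurable
      measurableSet_Ioi
  have hGbound : ∀ᵐ u ∂(volume.restrict (Ioi 0)),
      ‖G u‖ ≤ ((d:ℝ)*(d:ℝ)*‖D'‖) * ((c+u)^2)⁻¹ := by
    filter_upwards [ae_restrict_mem measurableSet_Ioi] with u hu
    have hu' : (0:ℝ) < u := hu
    have hb := (inv_bound herm1 hc hco1 hu'.le).2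
    have hcu : (0:ℝ) < c + u := by linarith
    have h1 : (0:ℝ) ≤ ‖D'‖ := norm_nonneg _
    have h2 : (0:ℝ) ≤ ‖(ρ t₁ + (u:ℂ) • 1)⁻¹‖ := norm_nonneg _
    have h3 : (0:ℝ) ≤ (d:ℝ)/(c+u) := by positivity
    calc ‖G u‖ ≤ ‖(ρ t₁ + (u:ℂ) • 1)⁻¹ * D'‖ * ‖(ρ t₁ + (u:ℂ) • 1)⁻¹‖ := norm_mul_le _ _
      _ ≤ ‖(ρ t₁ + (u:ℂ) • 1)⁻¹‖ * ‖D'‖ * ‖(ρ t₁ + (u:ℂ) • 1)⁻¹‖ :=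
          mul_le_mul_of_nonneg_right (norm_mul_le _ _) (norm_nonneg _)
      _ ≤ ((d:ℝ)/(c+u)) * ‖D'‖ * ((d:ℝ)/(c+u)) :=
          mul_le_mul (mul_le_mul hb le_rfl h1 h3) hb h2 (by positivity)
      _ = ((d:ℝ)*(d:ℝ)*‖D'‖) * ((c+u)^2)⁻¹ := by field_simp
  have hGint : IntegrableOn G (Ioi 0) :=
    Integrable.mono' ((integrableOn_inv_sq hc).const_mul ((d:ℝ)*(d:ℝ)*‖D'‖)) hGmeas hGbound
  rw [matIntegral_eq hGint]; refine hasDerivAt_iff_tendsto_slope.mpr ?_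
  -- the good events
  have hslopeD : Tendsto (slope ρ t₁) (𝓝[≠] t₁) (𝓝 D') := hasDerivAt_iff_tendsto_slope.mp hρ'
  have hevents : ∀ᶠ t in 𝓝[≠] t₁, (ρ t).PosDef ∧
      (∀ x : Fin d → ℂ, c * s2 x ≤ (star x ⬝ᵥ (ρ t) *ᵥ x).re) ∧ ‖slope ρ t₁ t‖ ≤ ‖D'‖ + 1 := by
    have h1 : ∀ᶠ t in 𝓝[≠] t₁, (DifferentiableAt ℝ ρ t ∧ (ρ t).PosDef) ∧
        ∀ x : Fin d → ℂ, c * s2 x ≤ (star x ⬝ᵥ ρ t *ᵥ x).re :=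
      (h.and hcoev).filter_mono nhdsWithin_le_nhds
    have h2 : ∀ᶠ t in 𝓝[≠] t₁, ‖slope ρ t₁ t‖ ≤ ‖D'‖ + 1 :=
      hslopeD.norm.eventually_le_const (by linarith [norm_nonneg D'])
    filter_upwards [h1, h2] with t ht hts
    exact ⟨ht.1.2, ht.2, hts⟩
  set H : ℝ → ℝ → Matrix (Fin d) (Fin d) ℂ :=
    fun t u => (ρ t₁ + (u:ℂ) • 1)⁻¹ * slope ρ t₁ t * (ρ t + (u:ℂ) • 1)⁻¹ with hH
  -- slope of matLog ∘ ρ equals ∫ H t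
  have hslope_eq : ∀ᶠ t in 𝓝[≠] t₁,
      slope (fun s => matLog (ρ s)) t₁ t = ∫ u in Ioi (0:ℝ), H t u := by
    filter_upwards [hevents] with t ht
    obtain ⟨hpdt, hcot, -⟩ := ht
    have hFt := matLog_eq_integral hpdt
    have hFt₁ := matLog_eq_integral hpd1
    rw [slope_def_module, ← hFt, ← hFt₁,
      ← integral_sub (integrable_matF hpdt) (integrable_matF hpd1), ← integral_smul]
    refine setIntegral_congr_fun measurableSet_Ioi (fun u hu => ?_)
    have hu' : (0:ℝ) < u := hu
    have hdetA : IsUnit (ρ t + (u:ℂ) • 1).det :=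
      (inv_bound hpdt.1 hc hcot hu'.le).1.det_pos.ne'.isUnit
    have hdetB : IsUnit (ρ t₁ + (u:ℂ) • 1).det :=
      (inv_bound herm1 hc hco1 hu'.le).1.det_pos.ne'.isUnit
    have hdiff : ((((1 + u)⁻¹ : ℝ) : ℂ) • (1 : Matrix (Fin d) (Fin d) ℂ)
          - (ρ t + (u:ℂ) • 1)⁻¹)
        - ((((1 + u)⁻¹ : ℝ) : ℂ) • (1 : Matrix (Fin d) (Fin d) ℂ) - (ρ t₁ + (u:ℂ) • 1)⁻¹)
        = (ρ t₁ + (u:ℂ) • 1)⁻¹ * (ρ t - ρ t₁) * (ρ t + (u:ℂ) • 1)⁻¹ := by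
      have hid := inv_sub_inv_mat hdetA hdetB
      have harr : (ρ t + (u:ℂ) • 1) - (ρ t₁ + (u:ℂ) • 1) = ρ t - ρ t₁ := by
        abel
      rw [sub_sub_sub_cancel_left, hid, harr]
    show (t - t₁)⁻¹ • (((((1 + u)⁻¹ : ℝ) : ℂ) • (1 : Matrix (Fin d) (Fin d) ℂ)
          - (ρ t + (u:ℂ) • 1)⁻¹)
        - ((((1 + u)⁻¹ : ℝ) : ℂ) • (1 : Matrix (Fin d) (Fin d) ℂ) - (ρ t₁ + (u:ℂ) • 1)⁻¹))
        = H t u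
    rw [hdiff, hH]
    show (t - t₁)⁻¹ • ((ρ t₁ + (u:ℂ) • 1)⁻¹ * (ρ t - ρ t₁) * (ρ t + (u:ℂ) • 1)⁻¹)
        = (ρ t₁ + (u:ℂ) • 1)⁻¹ * slope ρ t₁ t * (ρ t + (u:ℂ) • 1)⁻¹
    rw [slope_def_module, ← smul_mul_assoc, ← mul_smul_comm]
  -- dominated convergence
  have hHmeas : ∀ᶠ t in 𝓝[≠] t₁, AEStronglyMeasurable (H t) (volume.restrict (Ioi 0)) := by
    filter_upwards [hevents] with t ht
    exact ((ContinuousOn.mul (ContinuousOn.mul (contOn_inv_shift herm1 hc hco1)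
      continuousOn_const) (contOn_inv_shift ht.1.1 hc ht.2.1))).aestronglyMeasurable
      measurableSet_Ioi
  have hHbound : ∀ᶠ t in 𝓝[≠] t₁, ∀ᵐ u ∂(volume.restrict (Ioi 0)),
      ‖H t u‖ ≤ ((d:ℝ)*(d:ℝ)*(‖D'‖+1)) * ((c+u)^2)⁻¹ := by
    filter_upwards [hevents] with t ht
    filter_upwards [ae_restrict_mem measurableSet_Ioi] with u hu
    have hu' : (0:ℝ) < u := hu
    have hcu : (0:ℝ) < c + u := by linarith
    have hbB := (inv_bound herm1 hc hco1 hu'.le).2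
    have hbA := (inv_bound ht.1.1 hc ht.2.1 hu'.le).2
    have hsb := ht.2.2
    have h1 : (0:ℝ) ≤ ‖slope ρ t₁ t‖ := norm_nonneg _
    have h3 : (0:ℝ) ≤ (d:ℝ)/(c+u) := by positivity
    calc ‖H t u‖ ≤ ‖(ρ t₁ + (u:ℂ) • 1)⁻¹ * slope ρ t₁ t‖ * ‖(ρ t + (u:ℂ) • 1)⁻¹‖ :=
          norm_mul_le _ _
      _ ≤ ‖(ρ t₁ + (u:ℂ) • 1)⁻¹‖ * ‖slope ρ t₁ t‖ * ‖(ρ t + (u:ℂ) • 1)⁻¹‖ :=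
          mul_le_mul_of_nonneg_right (norm_mul_le _ _) (norm_nonneg _)
      _ ≤ ((d:ℝ)/(c+u)) * (‖D'‖+1) * ((d:ℝ)/(c+u)) :=
          mul_le_mul (mul_le_mul hbB hsb h1 h3) hbA (norm_nonneg _) (by positivity)
      _ = ((d:ℝ)*(d:ℝ)*(‖D'‖+1)) * ((c+u)^2)⁻¹ := by field_simp
  have hbint : IntegrableOn (fun u => ((d:ℝ)*(d:ℝ)*(‖D'‖+1)) * ((c+u)^2)⁻¹) (Ioi 0) :=
    (integrableOn_inv_sq hc).const_mul _
  have hHlim : ∀ᵐ u ∂(volume.restrict (Ioi 0)),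
      Tendsto (fun t => H t u) (𝓝[≠] t₁) (𝓝 (G u)) := by
    filter_upwards [ae_restrict_mem measurableSet_Ioi] with u hu
    have hu' : (0:ℝ) < u := hu
    have hdetB : IsUnit (ρ t₁ + (u:ℂ) • 1).det :=
      (inv_bound herm1 hc hco1 hu'.le).1.det_pos.ne'.isUnit
    have htB : Tendsto (fun t => ρ t + (u:ℂ) • 1) (𝓝[≠] t₁) (𝓝 (ρ t₁ + (u:ℂ) • 1)) :=
      (hcontρ.tendsto.mono_left nhdsWithin_le_nhds).add tendsto_const_nhds
    have hinvc : ContinuousAt (fun M : Matrix (Fin d) (Fin d) ℂ => M⁻¹) (ρ t₁ + (u:ℂ) • 1) :=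
      contAt_inv_mat (f := fun M : Matrix (Fin d) (Fin d) ℂ => M) continuousAt_id hdetB
    have hinvt : Tendsto (fun t => (ρ t + (u:ℂ) • 1)⁻¹) (𝓝[≠] t₁)
        (𝓝 ((ρ t₁ + (u:ℂ) • 1)⁻¹)) := hinvc.tendsto.comp htB
    exact (tendsto_const_nhds.mul hslopeD).mul hinvt
  have hmain := tendsto_integral_filter_of_dominated_convergence
    (μ := volume.restrict (Ioi 0)) (F := H) (f := G)
    (bound := fun u => ((d:ℝ)*(d:ℝ)*(‖D'‖+1)) * ((c+u)^2)⁻¹) hHmeas hHbound hbint hHlim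
  exact Filter.Tendsto.congr' (hslope_eq.mono fun t ht => ht.symm) hmain
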